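/- Consider the discrete-time quantum walk search on the n-dimensional hypercube, n ≥ 2. Suppose the marked set M can be partitioned into disjoint pairs of adjacent vertices: there is a set P of pairs such that each pair {i,j} ∈ P consists of vertices differing in exactly one bit (say bit c_{ij}), the pairs are pairwise disjoint, and M is the union of the pairs. Then the state φ = a·Σ_{v,c}|v,c⟩ − an·Σ_{{i,j}∈P}(|i, c_{ij}⟩ + |j, c_{ij}⟩), having amplitude −(n−1)a on the two basis states of each pair pointing to each other and amplitude a elsewhere, satisfies U′φ = φ. -/
import Mathlib


/-- Discrete-time quantum walk on the `n`-dimensional hypercube.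
Vertices are binary strings `v : Fin n → Bool`; basis states are `(v, c)` with coin
direction `c : Fin n`. `flipBit v c` flips bit `c` of `v` (i.e. `v ⊕ e_c`). -/
def HypercubeWalk.flipBit (n : ℕ) (v : Fin n → Bool) (c : Fin n) : Fin n → Bool :=
  Function.update v c (!(v c))

/-- The shift operator `S`, with `S|v, c⟩ = |v ⊕ e_c, c⟩`. -/
noncomputable def HypercubeWalk.shift (n : ℕ) (ψ : (Fin n → Bool) × Fin n → ℂ) :
    (Fin n → Bool) × Fin n → ℂ :=
  fun e => ψ (HypercubeWalk.flipBit n e.1 e.2, e.2)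

/-- The Grover coin `I ⊗ C`, `(Cψ)(v, c) = (2/n) Σ_{c'} ψ(v, c') − ψ(v, c)`. -/
noncomputable def HypercubeWalk.coin (n : ℕ) (ψ : (Fin n → Bool) × Fin n → ℂ) :
    (Fin n → Bool) × Fin n → ℂ :=
  fun e => (2 / (n : ℂ)) * (∑ c' : Fin n, ψ (e.1, c')) - ψ e

/-- The query `Q ⊗ I`, flipping the sign at marked vertices. -/
noncomputable def HypercubeWalk.query (n : ℕ) (M : Finset (Fin n → Bool))
    (ψ : (Fin n → Bool) × Fin n → ℂ) : (Fin n → Bool) × Fin n → ℂ :=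
  fun e => if e.1 ∈ M then -ψ e else ψ e

/-- One step of the search algorithm, `U' = S · (I ⊗ C) · (Q ⊗ I)`. -/
noncomputable def HypercubeWalk.step (n : ℕ) (M : Finset (Fin n → Bool))
    (ψ : (Fin n → Bool) × Fin n → ℂ) : (Fin n → Bool) × Fin n → ℂ :=
  HypercubeWalk.shift n (HypercubeWalk.coin n (HypercubeWalk.query n M ψ))


private lemma HypercubeWalk.flip_flip (n : ℕ) (v : Fin n → Bool) (c : Fin n) :
    HypercubeWalk.flipBit n (HypercubeWalk.flipBit n v c) c = v := by
  funext i
  by_cases h : i = c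
  · subst h; simp [HypercubeWalk.flipBit]
  · simp [HypercubeWalk.flipBit, Function.update_of_ne h]

private lemma HypercubeWalk.flip_ne (n : ℕ) (v : Fin n → Bool) (c : Fin n) :
    HypercubeWalk.flipBit n v c ≠ v := by
  intro h
  have := congrFun h c
  simp [HypercubeWalk.flipBit] at this

private lemma HypercubeWalk.flip_inj (n : ℕ) (v : Fin n → Bool) {c c' : Fin n}
    (h : HypercubeWalk.flipBit n v c = HypercubeWalk.flipBit n v c') : c = c' := by
  by_contra hne
  have := congrFun h c
  simp [HypercubeWalk.flipBit, Function.update, hne] at this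

/-- If the marked set `M` of the `n`-dimensional hypercube can be partitioned into
pairwise disjoint pairs of adjacent vertices `P` (each pair differing in exactly one
bit), then the state with amplitude `-(n-1)a` on the two darts of each pair pointing to
each other and amplitude `a` elsewhere is fixed by one step of the search algorithm. -/
theorem hypercube_paired_marked_stationary (n : ℕ) (hn : 2 ≤ n)
    (P : Finset ((Fin n → Bool) × (Fin n → Bool)))
    (hadj : ∀ p ∈ P, ∃ c : Fin n, p.2 = HypercubeWalk.flipBit n p.1 c)
    (hdisj : ∀ p ∈ P, ∀ q ∈ P, p ≠ q →
      ({p.1, p.2} : Finset (Fin n → Bool)) ∩ {q.1, q.2} = ∅)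
    (M : Finset (Fin n → Bool)) (hM : M = P.biUnion fun p => {p.1, p.2}) (a : ℂ) :
    HypercubeWalk.step n M
      (fun e => if (e.1, HypercubeWalk.flipBit n e.1 e.2) ∈ P ∨
          (HypercubeWalk.flipBit n e.1 e.2, e.1) ∈ P
        then -((n : ℂ) - 1) * a else a)
    = fun e => if (e.1, HypercubeWalk.flipBit n e.1 e.2) ∈ P ∨
          (HypercubeWalk.flipBit n e.1 e.2, e.1) ∈ P
        then -((n : ℂ) - 1) * a else a := by
  classical
  have hn0 : (n : ℂ) ≠ 0 := Nat.cast_ne_zero.mpr (by omega)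
  set φ : ((Fin n → Bool) × Fin n) → ℂ := fun e =>
    if (e.1, HypercubeWalk.flipBit n e.1 e.2) ∈ P ∨
        (HypercubeWalk.flipBit n e.1 e.2, e.1) ∈ P
      then -((n : ℂ) - 1) * a else a with hφ
  have memM : ∀ w, w ∈ M ↔ ∃ p ∈ P, w = p.1 ∨ w = p.2 := by
    intro w
    simp [hM, eq_comm]
  have hmem : ∀ p ∈ P, p.1 ∈ M ∧ p.2 ∈ M := by
    intro p hp
    exact ⟨(memM _).mpr ⟨p, hp, Or.inl rfl⟩, (memM _).mpr ⟨p, hp, Or.inr rfl⟩⟩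
  -- uniqueness of the paired direction
  have key : ∀ w ∈ M, ∃ c0 : Fin n,
      ((w, HypercubeWalk.flipBit n w c0) ∈ P ∨ (HypercubeWalk.flipBit n w c0, w) ∈ P) ∧
      ∀ c' : Fin n,
        ((w, HypercubeWalk.flipBit n w c') ∈ P ∨ (HypercubeWalk.flipBit n w c', w) ∈ P) →
        c' = c0 := by
    intro w hw
    obtain ⟨p, hp, hwp⟩ := (memM w).mp hw
    obtain ⟨c0, hc0⟩ := hadj p hp
    have hne : p.1 ≠ p.2 := by
      rw [hc0]; exact (HypercubeWalk.flip_ne n p.1 c0).symm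
    have hqeq : ∀ q ∈ P, (q.1 = w ∨ q.2 = w) → q = p := by
      intro q hq hqw
      by_contra hqp
      have hd := hdisj q hq p hp hqp
      have hwq : w ∈ ({q.1, q.2} : Finset (Fin n → Bool)) ∩ {p.1, p.2} := by
        refine Finset.mem_inter.mpr ⟨?_, ?_⟩
        · rcases hqw with h | h <;> simp [← h]
        · rcases hwp with h | h <;> simp [h]
      rw [hd] at hwq
      exact absurd hwq (Finset.notMem_empty w)
    rcases hwp with hwp | hwp
    · refine ⟨c0, Or.inl ?_, ?_⟩
      · rw [hwp, ← hc0]; simpa using hp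
      · intro c' hc'
        rcases hc' with hc' | hc'
        · have hq := hqeq _ hc' (Or.inl rfl)
          have h2 : HypercubeWalk.flipBit n w c' = p.2 := congrArg Prod.snd hq
          rw [hc0, ← hwp] at h2
          exact HypercubeWalk.flip_inj n w h2
        · have hq := hqeq _ hc' (Or.inr rfl)
          have h2 : w = p.2 := congrArg Prod.snd hq
          exact absurd (hwp.symm.trans h2) hne
    · have hflipw : HypercubeWalk.flipBit n w c0 = p.1 := by
        rw [hwp, hc0, HypercubeWalk.flip_flip]
      refine ⟨c0, Or.inr ?_, ?_⟩
      · rw [hflipw, hwp]; simpa using hp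
      · intro c' hc'
        rcases hc' with hc' | hc'
        · have hq := hqeq _ hc' (Or.inl rfl)
          have h1 : w = p.1 := congrArg Prod.fst hq
          exact absurd (h1.symm.trans hwp) hne
        · have hq := hqeq _ hc' (Or.inr rfl)
          have h1 : HypercubeWalk.flipBit n w c' = p.1 := congrArg Prod.fst hq
          rw [← hflipw] at h1
          exact HypercubeWalk.flip_inj n w h1
  -- sum of φ over coin directions
  have hsum0 : ∀ w ∈ M, ∑ c' : Fin n, φ (w, c') = 0 := by
    intro w hw
    obtain ⟨c0, hc0, huniq⟩ := key w hw
    have : ∀ c' : Fin n, φ (w, c') = if c' = c0 then -((n : ℂ) - 1) * a else a := by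
      intro c'
      simp only [hφ]
      by_cases h : c' = c0
      · subst h; simp [hc0]
      · rw [if_neg h, if_neg (fun hc => h (huniq c' hc))]
    rw [Finset.sum_congr rfl fun c' _ => this c',
      ← Finset.add_sum_erase Finset.univ _ (Finset.mem_univ c0), if_pos rfl,
      Finset.sum_congr rfl (fun c' hc' => if_neg (Finset.ne_of_mem_erase hc')),
      Finset.sum_const, Finset.card_erase_of_mem (Finset.mem_univ c0),
      Finset.card_univ, Fintype.card_fin, nsmul_eq_mul,
      Nat.cast_sub (by omega : 1 ≤ n), Nat.cast_one]
    ring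
  have hsumn : ∀ w, w ∉ M → ∑ c' : Fin n, φ (w, c') = (n : ℂ) * a := by
    intro w hw
    have : ∀ c' : Fin n, φ (w, c') = a := by
      intro c'
      simp only [hφ]
      rw [if_neg]
      intro hc
      rcases hc with hc | hc
      · exact hw ((hmem _ hc).1)
      · exact hw ((hmem _ hc).2)
    rw [Finset.sum_congr rfl fun c' _ => this c', Finset.sum_const,
      Finset.card_univ, Fintype.card_fin, nsmul_eq_mul]
  -- pointwise computation
  funext e
  obtain ⟨v, c⟩ := e
  set w := HypercubeWalk.flipBit n v c with hwdef
  have hvw : HypercubeWalk.flipBit n w c = v := HypercubeWalk.flip_flip n v c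
  have hφsymm : φ (w, c) = φ (v, c) := by
    simp only [hφ, hvw, ← hwdef]
    exact if_congr or_comm rfl rfl
  show HypercubeWalk.step n M φ (v, c) = φ (v, c)
  simp only [HypercubeWalk.step, HypercubeWalk.shift, HypercubeWalk.coin,
    HypercubeWalk.query, ← hwdef]
  by_cases hw : w ∈ M
  · simp only [hw, if_true]
    rw [Finset.sum_neg_distrib, hsum0 w hw]
    rw [← hφsymm]
    ring
  · simp only [hw, if_false]
    rw [hsumn w hw]
    have h1 : φ (w, c) = a := by
      simp only [hφ]
      rw [if_neg]
      intro hc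
      rcases hc with hc | hc
      · exact hw ((hmem _ hc).1)
      · exact hw ((hmem _ hc).2)
    have h2 : φ (v, c) = a := by
      simp only [hφ]
      rw [if_neg]
      intro hc
      rcases hc with hc | hc
      · exact hw ((hmem _ hc).2)
      · exact hw ((hmem _ hc).1)
    rw [h1, h2]
    field_simp
    ring
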